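/- Let N be a finite Galois extension of a field L with Galois group G = Gal(N/L), let M be an intermediate field of N/L, and let S = Gal(N/M) ≤ G be the subgroup fixing M pointwise. Then [M:L] equals the number of L-algebra automorphisms of M multiplied by the index [G : N_G(S)] of the normalizer of S in G (the latter being the number of conjugate subgroups of S in G). -/

import Mathlib

universe u v

open IntermediateField Subgroup

variable (L : Type u) (N : Type v) [Field L] [Field N] [Algebra L N]
    [FiniteDimensional L N] [IsGalois L N] (M : IntermediateField L N)

open scoped Pointwise

variable {L N M} in
lemma aux_mem_normalizer_iff (σ : N ≃ₐ[L] N) :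
    σ ∈ (normalizer (M.fixingSubgroup : Set (N ≃ₐ[L] N))) ↔ M.map σ = M := by
  have key : ∀ τ : N ≃ₐ[L] N, (τ ∈ (MulAut.conj σ) • M.fixingSubgroup ↔
      σ⁻¹ * τ * σ ∈ M.fixingSubgroup) := by
    intro τ
    rw [Subgroup.mem_pointwise_smul_iff_inv_smul_mem]
    simp only [MulAut.smul_def, MulAut.conj_inv_apply]
  constructor
  · intro hσ
    have h : (M.map σ).fixingSubgroup = M.fixingSubgroup := by
      rw [IsGalois.map_fixingSubgroup]
      ext τ
      rw [key τ, Subgroup.mem_normalizer_iff.mp hσ (σ⁻¹ * τ * σ),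
        show σ * (σ⁻¹ * τ * σ) * σ⁻¹ = τ by group]
    have := congrArg IntermediateField.fixedField h
    rwa [IsGalois.fixedField_fixingSubgroup, IsGalois.fixedField_fixingSubgroup] at this
  · intro h
    have h2 : (MulAut.conj σ) • M.fixingSubgroup = M.fixingSubgroup := by
      rw [← IsGalois.map_fixingSubgroup, h]
    rw [Subgroup.mem_normalizer_iff]
    intro τ
    constructor
    · intro hτ
      have : σ * τ * σ⁻¹ ∈ (MulAut.conj σ) • M.fixingSubgroup := by
        rw [key]; group; simpa using hτ
      rwa [h2] at this
    · intro hτ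
      rw [← h2, key] at hτ
      group at hτ
      simpa using hτ

variable {L N M} in
noncomputable def auxRestrict : (normalizer (M.fixingSubgroup : Set (N ≃ₐ[L] N))) →* (M ≃ₐ[L] M) where
  toFun σ := (intermediateFieldMap σ.1 M).trans (equivOfEq
    (by rw [AlgEquiv.toAlgHom_eq_coe]; exact aux_mem_normalizer_iff σ.1 |>.mp σ.2))
  map_one' := AlgEquiv.ext fun x => Subtype.ext rfl
  map_mul' σ τ := AlgEquiv.ext fun x => Subtype.ext rfl

variable {L N M} in
lemma auxRestrict_apply (σ : (normalizer (M.fixingSubgroup : Set (N ≃ₐ[L] N)))) (x : M) :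
    (auxRestrict σ x : N) = σ.1 x := rfl

variable {L N M} in
lemma auxRestrict_surjective : Function.Surjective (auxRestrict (L := L) (N := N) (M := M)) := by
  intro τ
  have hcomm : ∀ x : M, (τ.liftNormal N) (x : N) = (τ x : N) := fun x =>
    τ.liftNormal_commutes N x
  have hmem : τ.liftNormal N ∈ (normalizer (M.fixingSubgroup : Set (N ≃ₐ[L] N))) := by
    rw [aux_mem_normalizer_iff]
    apply le_antisymm
    · rintro _ ⟨x, hx, rfl⟩
      simpa using (hcomm ⟨x, hx⟩ ▸ (τ ⟨x, hx⟩).2)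
    · intro x hx
      refine ⟨(τ.symm ⟨x, hx⟩ : N), (τ.symm ⟨x, hx⟩).2, ?_⟩
      have := hcomm (τ.symm ⟨x, hx⟩)
      simp only [AlgEquiv.apply_symm_apply] at this
      simpa using this
  refine ⟨⟨τ.liftNormal N, hmem⟩, ?_⟩
  ext x
  exact (auxRestrict_apply ⟨τ.liftNormal N, hmem⟩ x).trans (hcomm x)

variable {L N M} in
lemma auxRestrict_ker :
    (auxRestrict (L := L) (N := N) (M := M)).ker =
      M.fixingSubgroup.subgroupOf (normalizer (M.fixingSubgroup : Set (N ≃ₐ[L] N))) := by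
  ext σ
  simp only [MonoidHom.mem_ker, Subgroup.mem_subgroupOf]
  rw [IntermediateField.mem_fixingSubgroup_iff]
  constructor
  · intro h x hx
    have := congrArg (Subtype.val) (congrArg (fun e : M ≃ₐ[L] M => e ⟨x, hx⟩) h)
    simpa [auxRestrict_apply] using this
  · intro h
    ext x
    show ((auxRestrict σ) x : N) = ((1 : M ≃ₐ[L] M) x : N)
    rw [auxRestrict_apply σ x, AlgEquiv.one_apply]
    exact h x x.2

/-- Let `N/L` be a finite Galois extension with Galois group `G`, `M` an
intermediate field, and `S = Gal(N/M)` the subgroup of `G` fixing `M` pointwise.  Then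
`[M:L]` equals the number of `L`-algebra automorphisms of `M` times the index `[G : N_G(S)]`
of the normalizer of `S` in `G` (the number of conjugates of `S` in `G`). -/
theorem finrank_eq_card_automorphisms_mul_index_normalizer
    (L : Type u) (N : Type v) [Field L] [Field N] [Algebra L N]
    [FiniteDimensional L N] [IsGalois L N]
    (M : IntermediateField L N) :
    Module.finrank L M =
      Nat.card (M ≃ₐ[L] M) * (Subgroup.normalizer (IntermediateField.fixingSubgroup M : Set (N ≃ₐ[L] N))).index := by
  classical
  have hS : Nat.card (M.fixingSubgroup) = Module.finrank M N := by
    rw [Nat.card_congr (IntermediateField.fixingSubgroupEquiv M).toEquiv,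
      IsGalois.card_aut_eq_finrank M N]
  have hG : Nat.card (N ≃ₐ[L] N) = Module.finrank L N := by
    rw [IsGalois.card_aut_eq_finrank L N]
  have hidx : M.fixingSubgroup.index = Module.finrank L M := by
    have h1 : M.fixingSubgroup.index * Nat.card M.fixingSubgroup = Nat.card (N ≃ₐ[L] N) :=
      Subgroup.index_mul_card M.fixingSubgroup
    rw [hS, hG, ← Module.finrank_mul_finrank L M N] at h1
    exact Nat.eq_of_mul_eq_mul_right Module.finrank_pos h1
  have hcard : Nat.card (M ≃ₐ[L] M) =
      M.fixingSubgroup.relIndex (normalizer (M.fixingSubgroup : Set (N ≃ₐ[L] N))) := by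
    have e := (QuotientGroup.quotientKerEquivOfSurjective _
      (auxRestrict_surjective (L := L) (N := N) (M := M))).toEquiv
    have h2 := (Nat.card_congr e).symm
    rw [auxRestrict_ker] at h2
    rw [h2]
    rfl
  rw [← hidx, hcard, Subgroup.relIndex_mul_index (Subgroup.le_normalizer (H := M.fixingSubgroup))]
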